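/- Let e : (0,∞) → ℝ be differentiable and let σ : (0,∞) → ℝ satisfy σ′(x) = e′(x)/x for all x > 0. Define h(θ) = 1 + e(θ) + θ and F(z) = z·h(1/z) − σ(1/z) for z > 0. Then F′(z) = 1 + e(1/z) for all z > 0, and consequently for all a, b > 0, F(b) − F(a) = (b−a)·(1 + ∫₀¹ e(1/(a + s(b−a))) ds). In particular, when a ≠ b, the quantity E := (F(b) − F(a))/(b−a) equals 1 + ∫₀¹ e(1/(a+s(b−a))) ds, which is consistent with 1 + e. -/

import Mathlib

/-- For a Synge-type EOS with internal energy `e` (derivative `e′`) and entropy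
antiderivative `σ` with `σ′(x) = e′(x)/x` on `(0,∞)`, the function
`F(z) = z·h(1/z) − σ(1/z)` (where `h(θ) = 1 + e(θ) + θ`) satisfies
`F′(z) = 1 + e(1/z)` for `z > 0`; consequently
`F(b) − F(a) = (b−a)(1 + ∫₀¹ e(1/(a+s(b−a))) ds)` for `a, b > 0`, and for `a ≠ b`
the quotient `E = (F(b)−F(a))/(b−a)` equals `1 + ∫₀¹ e(1/(a+s(b−a))) ds`. -/
theorem stmt7 (e e' σ : ℝ → ℝ)
    (he : ∀ x > (0 : ℝ), HasDerivAt e (e' x) x)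
    (hσ : ∀ x > (0 : ℝ), HasDerivAt σ (e' x / x) x) :
    let h : ℝ → ℝ := fun θ => 1 + e θ + θ
    let F : ℝ → ℝ := fun z => z * h (1 / z) - σ (1 / z)
    (∀ z > (0 : ℝ), HasDerivAt F (1 + e (1 / z)) z) ∧
      (∀ a b : ℝ, 0 < a → 0 < b →
        F b - F a = (b - a) * (1 + ∫ s in (0 : ℝ)..1, e (1 / (a + s * (b - a))))) ∧
      (∀ a b : ℝ, 0 < a → 0 < b → a ≠ b →
        (F b - F a) / (b - a) = 1 + ∫ s in (0 : ℝ)..1, e (1 / (a + s * (b - a)))) := by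
  intro h F
  have hF : ∀ z > (0 : ℝ), HasDerivAt F (1 + e (1 / z)) z := by
    intro z hz
    have hz' : (0:ℝ) < 1 / z := by positivity
    have hinv : HasDerivAt (fun z : ℝ => 1 / z) (-(1 / z ^ 2)) z := by
      simpa [one_div] using hasDerivAt_inv hz.ne'
    have hei : HasDerivAt (fun z : ℝ => e (1 / z)) (e' (1 / z) * (-(1 / z ^ 2))) z :=
      (he _ hz').comp z hinv
    have hσi : HasDerivAt (fun z : ℝ => σ (1 / z)) ((e' (1 / z) / (1 / z)) * (-(1 / z ^ 2))) z :=
      (hσ _ hz').comp z hinv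
    have hh : HasDerivAt (fun z : ℝ => z * (1 + e (1 / z) + 1 / z))
        (1 * (1 + e (1 / z) + 1 / z) + z * (0 + e' (1 / z) * (-(1 / z ^ 2)) + -(1 / z ^ 2))) z :=
      (hasDerivAt_id z).mul (((hasDerivAt_const z (1:ℝ)).add hei).add hinv)
    have hFD := hh.sub hσi
    have : HasDerivAt F
        (1 * (1 + e (1 / z) + 1 / z) + z * (0 + e' (1 / z) * (-(1 / z ^ 2)) + -(1 / z ^ 2))
          - (e' (1 / z) / (1 / z)) * (-(1 / z ^ 2))) z := hFD
    convert this using 1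
    have hzne : z ≠ 0 := hz.ne'
    field_simp
    ring
  have key : ∀ a b : ℝ, 0 < a → 0 < b →
      F b - F a = (b - a) * (1 + ∫ s in (0 : ℝ)..1, e (1 / (a + s * (b - a)))) := by
    intro a b ha hb
    have hpos : ∀ s ∈ Set.uIcc (0:ℝ) 1, 0 < a + s * (b - a) := by
      intro s hs
      rw [Set.uIcc_of_le zero_le_one] at hs
      obtain ⟨h1, h2⟩ := hs
      rcases le_total a b with hc | hc
      · nlinarith
      · nlinarith
    have hline : ∀ s : ℝ, HasDerivAt (fun s : ℝ => a + s * (b - a)) (b - a) s := by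
      intro s
      simpa using ((hasDerivAt_id' s).mul_const (b - a)).const_add a
    have hg : ∀ s ∈ Set.uIcc (0:ℝ) 1,
        HasDerivAt (fun s => F (a + s * (b - a)))
          ((b - a) * (1 + e (1 / (a + s * (b - a))))) s := by
      intro s hs
      have := (hF _ (hpos s hs)).comp s (hline s)
      exact this.congr_deriv (by ring)
    have hcontinner : Continuous (fun s : ℝ => a + s * (b - a)) := by continuity
    have hce : ContinuousOn (fun s : ℝ => e (1 / (a + s * (b - a)))) (Set.uIcc (0:ℝ) 1) := by
      intro s hs
      apply ContinuousAt.continuousWithinAt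
      have h1 : ContinuousAt (fun s : ℝ => 1 / (a + s * (b - a))) s := by
        exact (continuousAt_const.div hcontinner.continuousAt (hpos s hs).ne')
      have h2 : ContinuousAt e (1 / (a + s * (b - a))) :=
        ((he _ (one_div_pos.mpr (hpos s hs))).differentiableAt).continuousAt
      exact ContinuousAt.comp (g := e) (f := fun s : ℝ => 1 / (a + s * (b - a))) h2 h1
    have hie : IntervalIntegrable (fun s : ℝ => e (1 / (a + s * (b - a)))) MeasureTheory.volume 0 1 :=
      hce.intervalIntegrable
    have hint : IntervalIntegrable (fun s : ℝ => (b - a) * (1 + e (1 / (a + s * (b - a)))))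
        MeasureTheory.volume 0 1 := by
      exact ((intervalIntegrable_const.add hie).const_mul _)
    have hFTC := intervalIntegral.integral_eq_sub_of_hasDerivAt hg hint
    have h0 : a + (0:ℝ) * (b - a) = a := by ring
    have h1 : a + (1:ℝ) * (b - a) = b := by ring
    rw [h0, h1] at hFTC
    rw [← hFTC]
    rw [intervalIntegral.integral_const_mul, intervalIntegral.integral_add intervalIntegrable_const hie]
    simp
  refine ⟨hF, key, ?_⟩
  intro a b ha hb hab
  rw [key a b ha hb]
  field_simp [sub_ne_zero.mpr (Ne.symm hab)]
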